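/- Let μ be a Λ-bounded premeasure that is Λ-absolutely continuous, witnessed by premeasures {μₙ} with supₙ‖μₙ‖⁺_Λ < ∞ and sup_I |(μ+μₙ)(I)| → 0. Then the Λ-singular part of μ vanishes: for every Λ-Carleson set F, μ_s(F) = −Σ_k μ(I_k) = 0, where {I_k} are the complementary arcs of F. -/

import Mathlib

open MeasureTheory Filter Metric Set
open scoped Topology ENNReal

noncomputable section

instance : Fact ((0:ℝ) < 1) := ⟨one_pos⟩

/-- The circle of circumference 1. -/
abbrev Circle1 := AddCircle (1 : ℝ)

/-- Arcs (possibly half-open, possibly empty) of the circle. -/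
def IsArc (S : Set Circle1) : Prop :=
  ∃ a l : ℝ, 0 ≤ l ∧ l ≤ 1 ∧ S = (fun x : ℝ => (x : Circle1)) '' Set.Ico a (a + l)

/-- Normalized length of a subset of the circle. -/
def arcLen (S : Set Circle1) : ℝ := (volume S).toReal

/-- A premeasure on the circle: finitely additive on arcs, total mass zero,
continuous on nested sequences of arcs with empty intersection. -/
structure Premeasure where
  m : Set Circle1 → ℝ
  empty : m ∅ = 0
  total : m Set.univ = 0
  union : ∀ S T : Set Circle1, Disjoint S T → IsArc T → m (S ∪ T) = m S + m T
  cont : ∀ I : ℕ → Set Circle1, (∀ n, IsArc (I n)) → (∀ n, I (n + 1) ⊆ I n) →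
    (⋂ n, I n) = ∅ → Tendsto (fun n => m (I n)) atTop (𝓝 0)

/-- `μ(I) ≤ C |I| Λ(|I|)` for every arc `I`. -/
def LambdaBounded (Λ : ℝ → ℝ) (μ : Premeasure) (C : ℝ) : Prop :=
  ∀ S : Set Circle1, IsArc S → μ.m S ≤ C * arcLen S * Λ (arcLen S)

/-- Majorant hypotheses on `Λ`. -/
def Majorant (Λ : ℝ → ℝ) : Prop :=
  (∀ t ∈ Set.Ioc (0:ℝ) 1, 0 < Λ t) ∧ AntitoneOn Λ (Set.Ioc 0 1) ∧
  MonotoneOn (fun t => t * Λ t) (Set.Ioc 0 1) ∧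
  Tendsto (fun t => t * Λ t) (𝓝[>] 0) (𝓝 0) ∧
  Tendsto Λ (𝓝[>] 0) atTop

namespace Stmt19Aux

def arc (a l : ℝ) : Set Circle1 := (fun x : ℝ => (x : Circle1)) '' Set.Ico a (a + l)

lemma isArc_arc {a l : ℝ} (h0 : 0 ≤ l) (h1 : l ≤ 1) : IsArc (arc a l) := ⟨a, l, h0, h1, rfl⟩

lemma arc_univ (a : ℝ) : arc a 1 = univ := by
  simpa [arc] using AddCircle.coe_image_Ico_eq (1:ℝ) a

lemma arc_empty (a : ℝ) {l : ℝ} (h : l ≤ 0) : arc a l = ∅ := by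
  have : Ico a (a+l) = ∅ := Ico_eq_empty (by intro hlt; simp at hlt; linarith)
  simp [arc, this]

lemma mem_arc {a l : ℝ} (hl : 0 < l) : ((a : Circle1)) ∈ arc a l :=
  ⟨a, by simp [hl], rfl⟩

lemma coe_eq_coe {x y : ℝ} : (x : Circle1) = (y : Circle1) ↔ ∃ n : ℤ, x - y = n := by
  rw [QuotientAddGroup.eq_iff_sub_mem, AddSubgroup.mem_zmultiples_iff]
  constructor
  · rintro ⟨n, hn⟩; exact ⟨n, by simpa using hn.symm⟩
  · rintro ⟨n, hn⟩; exact ⟨n, by simpa using hn.symm⟩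

lemma coe_inj {a x y : ℝ} (hx : x ∈ Ico a (a+1)) (hy : y ∈ Ico a (a+1))
    (h : (x : Circle1) = y) : x = y :=
  (AddCircle.coe_eq_coe_iff_of_mem_Ico hx hy).mp h

lemma arc_int_translate (a l : ℝ) (n : ℤ) : arc (a + n) l = arc a l := by
  unfold arc
  ext z
  constructor
  · rintro ⟨y, hy, rfl⟩
    refine ⟨y - n, ⟨by simp at hy ⊢; constructor <;> linarith [hy.1, hy.2], ?_⟩⟩
    simp only
    rw [coe_eq_coe]
    exact ⟨-n, by push_cast; ring⟩
  · rintro ⟨y, hy, rfl⟩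
    refine ⟨y + n, ⟨by simp at hy ⊢; constructor <;> linarith [hy.1, hy.2], ?_⟩⟩
    simp only
    rw [coe_eq_coe]
    exact ⟨n, by push_cast; ring⟩

lemma arc_subset_arc {a l b s : ℝ} (hb : b ≤ a) (h : a + l ≤ b + s) :
    arc a l ⊆ arc b s :=
  Set.image_mono (Set.Ico_subset_Ico hb h)

lemma arc_union {a l m : ℝ} (h0 : 0 ≤ l) (hm : 0 ≤ m) :
    arc a (l + m) = arc a l ∪ arc (a + l) m := by
  unfold arc
  rw [← Set.image_union, Set.Ico_union_Ico_eq_Ico (by linarith) (by linarith)]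
  ring_nf

lemma arc_disjoint {a l b m : ℝ} (h0 : 0 ≤ l) (hm : 0 ≤ m) (h1 : a + l ≤ b)
    (h2 : b + m ≤ a + 1) : Disjoint (arc a l) (arc b m) := by
  rw [Set.disjoint_left]
  rintro z ⟨y1, hy1, rfl⟩ ⟨y2, hy2, hz⟩
  have h1a : y1 ∈ Ico a (a+1) := ⟨hy1.1, by linarith [hy1.2]⟩
  have h2a : y2 ∈ Ico a (a+1) := ⟨by linarith [hy2.1], by linarith [hy2.2]⟩
  have := coe_inj h1a h2a hz.symm
  have := hy1.2; have := hy2.1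
  linarith


lemma measurableSet_arc (a l : ℝ) : MeasurableSet (arc a l) := by
  rcases le_or_gt l 0 with h | h
  · have : Ico a (a+l) = ∅ := Ico_eq_empty (by intro hlt; simp at hlt; linarith)
    simp [arc, this]
  · have : arc a l = (fun x : ℝ => (x : Circle1)) '' Ioo a (a+l) ∪ {(a : Circle1)} := by
      unfold arc
      rw [← Set.Ioo_union_left (by linarith : a < a + l), Set.image_union]
      simp
    rw [this]
    refine MeasurableSet.union ?_ (measurableSet_singleton _)
    exact (QuotientAddGroup.isOpenMap_coe _ isOpen_Ioo).measurableSet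

lemma volume_arc {a l : ℝ} (h0 : 0 ≤ l) (h1 : l ≤ 1) :
    volume (arc a l) = ENNReal.ofReal l := by
  rcases eq_or_lt_of_le h0 with h | hl
  · have : Ico a (a+l) = ∅ := by rw [← h]; simp
    simp [arc, this, ← h]
  · have hmp := AddCircle.measurePreserving_mk (1:ℝ) a
    have hpre : (fun x : ℝ => (x : Circle1)) ⁻¹' (arc a l) ∩ Ioc a (a+1)
        = Ioo a (a+l) ∪ {a+1} := by
      ext x
      simp only [Set.mem_inter_iff, Set.mem_preimage, Set.mem_Ioc, Set.mem_union,
        Set.mem_Ioo, Set.mem_singleton_iff]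
      constructor
      · rintro ⟨⟨y, hy, hxy⟩, hx1, hx2⟩
        obtain ⟨n, hn⟩ := coe_eq_coe.mp hxy.symm
        have hy1 := hy.1; have hy2 := hy.2
        have hn0 : (-1 : ℝ) < n := by push_cast; linarith
        have hn1 : (n : ℝ) ≤ 1 := by push_cast; linarith
        have : n = 0 ∨ n = 1 := by
          have h01 : (-1:ℤ) < n := by exact_mod_cast hn0
          have h11 : n ≤ 1 := by exact_mod_cast hn1
          omega
        rcases this with rfl | rfl
        · left; simp at hn; constructor <;> linarith
        · right; simp at hn; linarith
      · rintro (⟨hx1, hx2⟩ | rfl)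
        · exact ⟨⟨x, ⟨le_of_lt hx1, by linarith⟩, rfl⟩, hx1, by linarith⟩
        · refine ⟨⟨a, ⟨le_refl a, by linarith⟩, ?_⟩, by linarith, le_refl _⟩
          simp only
          rw [coe_eq_coe]; exact ⟨-1, by push_cast; ring⟩
    calc volume (arc a l) = volume.restrict (Ioc a (a+1))
          ((fun x : ℝ => (x : Circle1)) ⁻¹' (arc a l)) :=
        (hmp.measure_preimage (measurableSet_arc a l).nullMeasurableSet).symm
      _ = volume ((fun x : ℝ => (x : Circle1)) ⁻¹' (arc a l) ∩ Ioc a (a+1)) := by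
          rw [Measure.restrict_apply']; exact measurableSet_Ioc
      _ = ENNReal.ofReal l := by
          rw [hpre]
          apply le_antisymm
          · calc volume (Ioo a (a+l) ∪ {a+1})
                ≤ volume (Ioo a (a+l)) + volume ({a+1} : Set ℝ) := measure_union_le _ _
              _ = ENNReal.ofReal l := by
                  rw [Real.volume_Ioo, Real.volume_singleton, add_zero]; congr 1; ring
          · calc ENNReal.ofReal l = volume (Ioo a (a+l)) := by rw [Real.volume_Ioo]; congr 1; ring
              _ ≤ _ := measure_mono Set.subset_union_left

lemma arcLen_arc {a l : ℝ} (h0 : 0 ≤ l) (h1 : l ≤ 1) : arcLen (arc a l) = l := by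
  rw [arcLen, volume_arc h0 h1, ENNReal.toReal_ofReal h0]

lemma arc_compl {a l : ℝ} (h0 : 0 ≤ l) (h1 : l ≤ 1) : (arc a l)ᶜ = arc (a+l) (1-l) := by
  have hu : arc a l ∪ arc (a+l) (1-l) = univ := by
    rw [← arc_union h0 (by linarith : (0:ℝ) ≤ 1 - l), show l + (1 - l) = 1 by ring, arc_univ]
  have hd : Disjoint (arc a l) (arc (a+l) (1-l)) :=
    arc_disjoint h0 (by linarith) le_rfl (by linarith)
  have : IsCompl (arc a l) (arc (a+l) (1-l)) :=
    ⟨hd, codisjoint_iff.mpr (by exact hu)⟩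
  exact this.compl_eq

lemma arc_subset_rep {a l b s : ℝ} (hl : 0 < l) (hs : s < 1)
    (hsub : arc a l ⊆ arc b s) :
    ∃ a', arc a' l = arc a l ∧ b ≤ a' ∧ a' + l ≤ b + s := by
  set a' := a - ⌊a - b⌋ with ha'
  have harc : arc a' l = arc a l := by
    have h2 := arc_int_translate a' l ⌊a - b⌋
    rw [show a' + (⌊a - b⌋ : ℝ) = a by rw [ha']; ring] at h2
    exact h2.symm
  have hfl := Int.floor_le (a - b)
  have hfl2 := Int.lt_floor_add_one (a - b)
  have hb1 : b ≤ a' := by rw [ha']; linarith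
  have hb2 : a' < b + 1 := by rw [ha']; linarith
  have hmem : (a' : Circle1) ∈ arc b s := hsub (harc ▸ mem_arc hl)
  obtain ⟨y, hy, hyeq⟩ := hmem
  have hyI : y ∈ Ico b (b+1) := ⟨hy.1, by have := hy.2; linarith⟩
  have ha'I : a' ∈ Ico b (b+1) := ⟨hb1, hb2⟩
  have hya : y = a' := coe_inj hyI ha'I hyeq
  have ha's : a' < b + s := hya ▸ hy.2
  refine ⟨a', harc, hb1, ?_⟩
  by_contra hcon
  push_neg at hcon
  have hmem2 : ((b+s : ℝ) : Circle1) ∈ arc b s :=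
    hsub (harc ▸ ⟨b+s, ⟨le_of_lt ha's, hcon⟩, rfl⟩)
  obtain ⟨z, hz, hzeq⟩ := hmem2
  obtain ⟨n, hn⟩ := coe_eq_coe.mp hzeq
  have h1 : (n:ℝ) < 0 := by linarith [hz.2]
  have h2 : (-1:ℝ) < n := by linarith [hz.1]
  have h1' : n < 0 := by exact_mod_cast h1
  have h2' : (-1:ℤ) < n := by exact_mod_cast h2
  omega

lemma arc_split {p q b s c m : ℝ} (hp : 0 < q) (hαb : b ≤ p) (hαs : p + q ≤ b + s)
    (hcb : b ≤ c) (hcs : c + m ≤ b + s) (hm : 0 < m)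
    (hd : Disjoint (arc p q) (arc c m)) :
    arc p q ⊆ arc b (c - b) ∨ arc p q ⊆ arc (c+m) (b + s - (c+m)) := by
  rcases lt_or_ge p c with h | h
  · left
    refine arc_subset_arc hαb ?_
    by_contra hcon; push_neg at hcon
    have hmem : (c : Circle1) ∈ arc p q := ⟨c, ⟨le_of_lt h, by linarith⟩, rfl⟩
    exact (Set.disjoint_left.mp hd hmem (mem_arc hm)).elim
  · right
    have h2 : c + m ≤ p := by
      by_contra hcon; push_neg at hcon
      have hmem : (p : Circle1) ∈ arc c m := ⟨p, ⟨h, hcon⟩, rfl⟩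
      exact (Set.disjoint_left.mp hd (mem_arc hp) hmem).elim
    exact arc_subset_arc (by linarith) (by linarith)

lemma pm_union_finset (ρ : Premeasure) {ι : Type*} (s : Finset ι)
    (A : ι → Set Circle1) (S : Set Circle1) :
    (∀ i ∈ s, IsArc (A i)) → (∀ i ∈ s, ∀ j ∈ s, i ≠ j → Disjoint (A i) (A j)) →
    (∀ i ∈ s, Disjoint S (A i)) →
    ρ.m (S ∪ ⋃ i ∈ s, A i) = ρ.m S + ∑ i ∈ s, ρ.m (A i) := by
  classical
  induction s using Finset.induction_on with
  | empty => intro _ _ _; simp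
  | @insert a s ha ih =>
    intro harc hd hS
    rw [Finset.set_biUnion_insert]
    have hU : S ∪ (A a ∪ ⋃ i ∈ s, A i) = (S ∪ ⋃ i ∈ s, A i) ∪ A a := by
      rw [Set.union_comm (A a) _, ← Set.union_assoc]
    have hUd : Disjoint (S ∪ ⋃ i ∈ s, A i) (A a) := by
      apply Disjoint.union_left (hS a (Finset.mem_insert_self a s))
      rw [Set.disjoint_left]
      simp only [Set.mem_iUnion]
      rintro x ⟨i, hi, hx⟩ hxa
      exact Set.disjoint_left.mp
        (hd i (Finset.mem_insert_of_mem hi) a (Finset.mem_insert_self a s)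
          (fun hia => ha (hia ▸ hi))) hx hxa
    rw [hU, ρ.union _ _ hUd (harc a (Finset.mem_insert_self a s)),
      ih (fun i hi => harc i (Finset.mem_insert_of_mem hi))
        (fun i hi j hj hij => hd i (Finset.mem_insert_of_mem hi) j (Finset.mem_insert_of_mem hj) hij)
        (fun i hi => hS i (Finset.mem_insert_of_mem hi)),
      Finset.sum_insert ha]
    ring

def GapInv (S : Set Circle1) (n : ℕ) (G : Fin n → ℝ × ℝ) : Prop :=
  (∀ i, 0 ≤ (G i).2 ∧ (G i).2 ≤ 1) ∧
  (∀ i j, i ≠ j → Disjoint (arc (G i).1 (G i).2) (arc (G j).1 (G j).2)) ∧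
  S = (⋃ i, arc (G i).1 (G i).2) ∧
  (∀ a l, 0 < l → arc a l ⊆ S → ∃ i, arc a l ⊆ arc (G i).1 (G i).2)

lemma gapInv_univ : GapInv Set.univ 1 (fun _ => ((0:ℝ), (1:ℝ))) := by
  refine ⟨fun i => ⟨zero_le_one, le_refl 1⟩, fun i j hij => absurd (Subsingleton.elim i j) hij,
    ?_, fun a l _ _ => ⟨0, by rw [arc_univ]; exact Set.subset_univ _⟩⟩
  simp [arc_univ, Set.iUnion_const]

lemma gapInv_step {S : Set Circle1} {n : ℕ} {G : Fin n → ℝ × ℝ}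
    (hG : GapInv S n G) {c m : ℝ} (hm : 0 < m) (hm1 : m ≤ 1) (hsub : arc c m ⊆ S) :
    ∃ G' : Fin (n+1) → ℝ × ℝ, GapInv (S \ arc c m) (n+1) G' := by
  obtain ⟨hlen, hdis, hunion, hsep⟩ := hG
  obtain ⟨i₀, hi₀⟩ := hsep c m hm hsub
  have hs1 : (G i₀).2 ≤ 1 := (hlen i₀).2
  have hkey : ∃ b' c', arc b' (G i₀).2 = arc (G i₀).1 (G i₀).2 ∧ arc c' m = arc c m ∧
      b' ≤ c' ∧ c' + m ≤ b' + (G i₀).2 ∧ ((G i₀).2 < 1 ∨ ((G i₀).2 = 1 ∧ b' = c')) := by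
    rcases lt_or_ge (G i₀).2 1 with hs | hs
    · obtain ⟨c', hc', h1, h2⟩ := arc_subset_rep hm hs hi₀
      exact ⟨(G i₀).1, c', rfl, hc', h1, h2, Or.inl hs⟩
    · have hs1' : (G i₀).2 = 1 := le_antisymm hs1 hs
      refine ⟨c, c, ?_, rfl, le_refl c, by linarith, Or.inr ⟨hs1', rfl⟩⟩
      rw [hs1', arc_univ, arc_univ]
  obtain ⟨b', c', hbeq, hceq, h1, h2, hcase⟩ := hkey
  set s := (G i₀).2 with hs_def
  set L1 := c' - b' with hL1
  set L3 := b' + s - (c' + m) with hL3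
  have hL1nn : 0 ≤ L1 := by rw [hL1]; linarith
  have hL3nn : 0 ≤ L3 := by rw [hL3]; linarith
  have hs0 : 0 ≤ s := (hlen i₀).1
  have hL1le : L1 ≤ 1 := by rw [hL1]; linarith
  have hL3le : L3 ≤ 1 := by rw [hL3]; linarith
  -- decomposition of the split gap
  have hdecomp : arc b' s = (arc b' L1 ∪ arc (c' + m) L3) ∪ arc c' m := by
    have e1 : arc b' s = arc b' L1 ∪ arc (b' + L1) (m + L3) := by
      rw [← arc_union hL1nn (by linarith)]
      congr 1; rw [hL1, hL3]; ring
    have e2 : arc (b' + L1) (m + L3) = arc c' m ∪ arc (c' + m) L3 := by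
      rw [show b' + L1 = c' by rw [hL1]; ring, ← arc_union (le_of_lt hm) hL3nn]
    rw [e1, e2]
    rw [Set.union_comm (arc c' m) _, ← Set.union_assoc]
  have hd_P1A : Disjoint (arc b' L1) (arc c' m) := by
    apply arc_disjoint hL1nn (le_of_lt hm) (by rw [hL1]; linarith) (by linarith)
  have hd_P2A : Disjoint (arc (c' + m) L3) (arc c' m) := by
    apply Disjoint.symm
    apply arc_disjoint (le_of_lt hm) hL3nn (le_refl _) (by linarith)
  have hd_P1P2 : Disjoint (arc b' L1) (arc (c' + m) L3) := by
    apply arc_disjoint hL1nn hL3nn (by rw [hL1]; linarith) (by linarith)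
  have hsplit : arc b' s \ arc c' m = arc b' L1 ∪ arc (c' + m) L3 := by
    rw [hdecomp, Set.union_diff_right,
      Disjoint.sdiff_eq_left (Disjoint.union_left hd_P1A hd_P2A)]
  have hP1sub : arc b' L1 ⊆ arc b' s := arc_subset_arc (le_refl _) (by rw [hL1]; linarith)
  have hP2sub : arc (c' + m) L3 ⊆ arc b' s := arc_subset_arc (by linarith) (by rw [hL3]; linarith)
  -- the new gap family
  set upd : Fin n → ℝ × ℝ := Function.update G i₀ (c' + m, L3) with hupd
  set G' : Fin (n+1) → ℝ × ℝ := Fin.cons (b', L1) upd with hG'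
  have hG'0 : G' 0 = (b', L1) := rfl
  have hG'succ : ∀ i : Fin n, G' i.succ = upd i := fun i => rfl
  have hupd_ne : ∀ i : Fin n, i ≠ i₀ → upd i = G i := fun i hi => Function.update_of_ne hi _ _
  have hupd_i₀ : upd i₀ = (c' + m, L3) := Function.update_self _ _ _
  have hAsub : arc c' m ⊆ arc (G i₀).1 (G i₀).2 := by rw [hceq]; exact hi₀
  refine ⟨G', ?_, ?_, ?_, ?_⟩
  · -- lengths
    intro i
    refine Fin.cases ?_ ?_ i
    · exact ⟨hL1nn, hL1le⟩
    · intro j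
      rw [hG'succ]
      by_cases hj : j = i₀
      · rw [hj, hupd_i₀]; exact ⟨hL3nn, hL3le⟩
      · rw [hupd_ne j hj]; exact hlen j
  · -- pairwise disjoint
    have key : ∀ j : Fin n, Disjoint (arc b' L1) (arc (upd j).1 (upd j).2) := by
      intro j
      by_cases hj : j = i₀
      · rw [hj, hupd_i₀]; exact hd_P1P2
      · rw [hupd_ne j hj]
        exact Set.disjoint_of_subset_left (hP1sub.trans (le_of_eq hbeq)) (hdis i₀ j (Ne.symm hj))
    have key2 : ∀ i j : Fin n, i ≠ j → Disjoint (arc (upd i).1 (upd i).2) (arc (upd j).1 (upd j).2) := by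
      intro i j hij
      by_cases hi : i = i₀
      · subst hi
        rw [hupd_i₀, hupd_ne j (Ne.symm hij)]
        exact Set.disjoint_of_subset_left (hP2sub.trans (le_of_eq hbeq)) (hdis i j hij)
      · by_cases hj : j = i₀
        · subst hj
          rw [hupd_i₀, hupd_ne i hi]
          exact (Set.disjoint_of_subset_left (hP2sub.trans (le_of_eq hbeq)) (hdis j i hij.symm)).symm
        · rw [hupd_ne i hi, hupd_ne j hj]; exact hdis i j hij
    intro i j hij
    rcases Fin.eq_zero_or_eq_succ i with rfl | ⟨i', rfl⟩ <;>
      rcases Fin.eq_zero_or_eq_succ j with rfl | ⟨j', rfl⟩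
    · exact absurd rfl hij
    · simp only [hG'0, hG'succ]; exact key j'
    · simp only [hG'0, hG'succ]; exact (key i').symm
    · simp only [hG'succ]
      exact key2 i' j' (fun h => hij (congrArg Fin.succ h))
  · -- union
    rw [hunion]
    ext x
    simp only [Set.mem_diff, Set.mem_iUnion]
    constructor
    · rintro ⟨⟨i, hxi⟩, hxA⟩
      by_cases hi : i = i₀
      · subst hi
        have : x ∈ arc b' s \ arc c' m := by
          rw [hbeq]
          exact ⟨hxi, by rwa [hceq]⟩
        rw [hsplit] at this
        rcases this with h | h
        · exact ⟨0, h⟩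
        · exact ⟨Fin.succ i, by rw [hG'succ, hupd_i₀]; exact h⟩
      · exact ⟨Fin.succ i, by rw [hG'succ, hupd_ne i hi]; exact hxi⟩
    · rintro ⟨j, hxj⟩
      rcases Fin.eq_zero_or_eq_succ j with rfl | ⟨j', rfl⟩
      · rw [hG'0] at hxj
        rename' hxj => hx
        refine ⟨⟨i₀, (hbeq ▸ hP1sub) hx⟩, fun hA => ?_⟩
        rw [← hceq] at hA
        exact Set.disjoint_left.mp hd_P1A hx hA
      · rw [hG'succ] at hxj
        rename' hxj => hx
        by_cases hj : j' = i₀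
        · rw [hj, hupd_i₀] at hx
          refine ⟨⟨i₀, (hbeq ▸ hP2sub) hx⟩, fun hA => ?_⟩
          rw [← hceq] at hA
          exact Set.disjoint_left.mp hd_P2A hx hA
        · rw [hupd_ne j' hj] at hx
          refine ⟨⟨j', hx⟩, fun hA => ?_⟩
          exact Set.disjoint_left.mp (hdis j' i₀ hj) hx (hAsub (by rwa [← hceq] at hA))
  · -- separation
    intro a l hl hsub'
    obtain ⟨i, hi⟩ := hsep a l hl (hsub'.trans Set.diff_subset)
    by_cases hii : i = i₀
    · rw [hii] at hi
      have hdisjA : Disjoint (arc a l) (arc c' m) := by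
        rw [hceq, Set.disjoint_right]
        intro x hx hax
        exact (hsub' hax).2 hx
      rcases hcase with hs | hbc
      · -- s < 1 : normalize and split
        obtain ⟨a'', ha''eq, ha''1, ha''2⟩ :=
          arc_subset_rep hl hs (show arc a l ⊆ arc b' s by rw [hbeq]; exact hi)
        have := arc_split hl ha''1 ha''2 h1 h2 hm
          (show Disjoint (arc a'' l) (arc c' m) by rw [ha''eq]; exact hdisjA)
        rcases this with h | h
        · refine ⟨0, ?_⟩
          rw [hG'0, ← ha''eq]
          simpa only [hL1] using h
        · refine ⟨Fin.succ i₀, ?_⟩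
          rw [hG'succ, hupd_i₀, ← ha''eq]
          simpa only [hL3] using h
      · -- s = 1 and b' = c' : the old gap is the full circle; new gap is the complement
        obtain ⟨hs1', hbc⟩ := hbc
        refine ⟨Fin.succ i₀, ?_⟩
        rw [hG'succ, hupd_i₀]
        have hsubc : arc a l ⊆ (arc c' m)ᶜ := fun x hx => Set.disjoint_left.mp hdisjA hx
        rw [arc_compl (le_of_lt hm) hm1] at hsubc
        have hL3' : L3 = 1 - m := by rw [hL3, hbc, hs1']; ring
        rw [show arc (c'+m) L3 = arc (c'+m) (1-m) by rw [hL3']]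
        exact hsubc
    · refine ⟨Fin.succ i, ?_⟩
      rw [hG'succ, hupd_ne i hii]
      exact hi

def EN (I : ℕ → Set Circle1) (N : ℕ) : Set Circle1 := Set.univ \ ⋃ k ∈ Finset.range N, I k

lemma isArc_measurable {S : Set Circle1} (h : IsArc S) : MeasurableSet S := by
  obtain ⟨a, l, _, _, rfl⟩ := h
  exact measurableSet_arc a l

lemma arcLen_nonneg (S : Set Circle1) : 0 ≤ arcLen S := ENNReal.toReal_nonneg

lemma arcLen_le_one (S : Set Circle1) : arcLen S ≤ 1 := by
  have h1 : volume S ≤ 1 := by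
    have := measure_mono (μ := (volume : Measure Circle1)) (Set.subset_univ S)
    rwa [AddCircle.measure_univ, ENNReal.ofReal_one] at this
  have := ENNReal.toReal_mono (by simp) h1
  simpa [arcLen] using this

lemma aa_nonneg {Λ : ℝ → ℝ} (hΛ : Majorant Λ) (S : Set Circle1) :
    0 ≤ arcLen S * Λ (arcLen S) := by
  rcases eq_or_lt_of_le (arcLen_nonneg S) with h | h
  · rw [← h, zero_mul]
  · exact le_of_lt (mul_pos h (hΛ.1 _ ⟨h, arcLen_le_one S⟩))

lemma exists_gapInv (I : ℕ → Set Circle1) (hI : ∀ k, IsArc (I k))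
    (hdisj : Pairwise (Function.onFun Disjoint I)) (N : ℕ) :
    ∃ n G, GapInv (EN I N) n G := by
  induction N with
  | zero => exact ⟨1, _, by simpa [EN] using gapInv_univ⟩
  | succ N ih =>
    obtain ⟨n, G, hG⟩ := ih
    have hEsucc : EN I (N+1) = EN I N \ I N := by
      unfold EN
      rw [Finset.range_add_one, Finset.set_biUnion_insert, Set.diff_diff, Set.union_comm]
    have hsubEN : I N ⊆ EN I N := by
      intro x hx
      refine ⟨Set.mem_univ x, ?_⟩
      simp only [Set.mem_iUnion, Finset.mem_range]
      rintro ⟨k, hk, hxk⟩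
      exact Set.disjoint_left.mp (hdisj (Nat.ne_of_lt hk).symm) hx hxk
    obtain ⟨c, m, hm0, hm1, hIN⟩ := hI N
    rcases eq_or_lt_of_le hm0 with hm | hm
    · refine ⟨n, G, ?_⟩
      have : I N = ∅ := by rw [hIN, ← hm]; simp [show Set.Ico c (c+0) = ∅ by simp]
      rwa [hEsucc, this, Set.diff_empty]
    · have hIarc : I N = arc c m := hIN
      obtain ⟨G', hG'⟩ := gapInv_step hG hm hm1 (hIarc ▸ hsubEN)
      exact ⟨n+1, G', by rwa [hEsucc, hIarc]⟩

lemma keyBound {Λ : ℝ → ℝ} (hΛ : Majorant Λ) {F : Set Circle1} (hF : IsClosed F)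
    (hF0 : volume F = 0)
    {I : ℕ → Set Circle1} (hI : ∀ k, IsArc (I k))
    (hdisj : Pairwise (Function.onFun Disjoint I))
    (hcomp : Fᶜ = ⋃ k, I k)
    (hent : Summable fun k => arcLen (I k) * Λ (arcLen (I k)))
    (ρ : Premeasure) (K : ℝ) (hK : 0 ≤ K) (hρ : LambdaBounded Λ ρ K) (N : ℕ) :
    ρ.m (EN I N) ≤ K * ∑' j, arcLen (I (j + N)) * Λ (arcLen (I (j + N))) := by
  classical
  set aa : ℕ → ℝ := fun k => arcLen (I k) * Λ (arcLen (I k)) with haa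
  have haan : ∀ k, 0 ≤ aa k := fun k => aa_nonneg hΛ (I k)
  have hentN : Summable fun j => aa (j + N) := (summable_nat_add_iff N).mpr hent
  obtain ⟨n, G, hlen, hdis, hunion, hsep⟩ := exists_gapInv I hI hdisj N
  -- dichotomy for each arc I k against each gap
  have hgapEN : ∀ i : Fin n, arc (G i).1 (G i).2 ⊆ EN I N := by
    intro i
    rw [hunion]
    exact Set.subset_iUnion (fun i => arc (G i).1 (G i).2) i
  have hIEN : ∀ k, N ≤ k → I k ⊆ EN I N := by
    intro k hk x hx
    refine ⟨Set.mem_univ x, ?_⟩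
    simp only [Set.mem_iUnion, Finset.mem_range]
    rintro ⟨k', hk', hxk⟩
    exact Set.disjoint_left.mp (hdisj (by omega : k ≠ k')) hx hxk
  have hdich : ∀ i : Fin n, ∀ k, I k ⊆ arc (G i).1 (G i).2 ∨
      arc (G i).1 (G i).2 ∩ I k = ∅ := by
    intro i k
    by_cases hke : I k = ∅
    · left; rw [hke]; exact Set.empty_subset _
    · rcases lt_or_ge k N with hk | hk
      · right
        rw [Set.eq_empty_iff_forall_notMem]
        rintro x ⟨hx1, hx2⟩
        exact ((hgapEN i hx1).2) (Set.mem_iUnion.mpr ⟨k, by simp [hk, hx2]⟩)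
      · obtain ⟨c, m, hm0, hm1, hIk⟩ := hI k
        have hm : 0 < m := by
          rcases eq_or_lt_of_le hm0 with hm | hm
          · exfalso; apply hke; rw [hIk, ← hm]; simp
          · exact hm
        have hIk' : I k = arc c m := hIk
        obtain ⟨i', hi'⟩ := hsep c m hm (by rw [← hIk']; exact hIEN k hk)
        by_cases hii : i' = i
        · left; rw [hIk']; rw [hii] at hi'; exact hi'
        · right
          rw [Set.eq_empty_iff_forall_notMem]
          rintro x ⟨hx1, hx2⟩
          rw [hIk'] at hx2
          exact Set.disjoint_left.mp (hdis i i' (fun h => hii h.symm)) hx1 (hi' hx2)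
  -- volume decomposition of each gap
  have hvol : ∀ i : Fin n, volume (arc (G i).1 (G i).2)
      = ∑' k, volume (arc (G i).1 (G i).2 ∩ I k) := by
    intro i
    set J := arc (G i).1 (G i).2 with hJ
    have h1 : volume (J ∩ F) + volume (J \ F) = volume J :=
      measure_inter_add_diff J hF.measurableSet
    have h2 : volume (J ∩ F) = 0 := measure_mono_null Set.inter_subset_right hF0
    have h3 : J \ F = ⋃ k, J ∩ I k := by
      rw [Set.diff_eq, hcomp, Set.inter_iUnion]
    rw [← h1, h2, zero_add, h3, measure_iUnion ?_ ?_]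
    · intro a b hab
      exact ((hdisj hab).mono Set.inter_subset_right Set.inter_subset_right)
    · exact fun k => (measurableSet_arc _ _).inter (isArc_measurable (hI k))
  -- real-valued lengths
  set v : Fin n → ℕ → ℝ := fun i k => (volume (arc (G i).1 (G i).2 ∩ I k)).toReal with hv
  have hvnn : ∀ i k, 0 ≤ v i k := fun i k => ENNReal.toReal_nonneg
  have hvsum : ∀ i, Summable (v i) := by
    intro i
    apply ENNReal.summable_toReal
    rw [← hvol i]
    exact measure_ne_top _ _
  have hlen_eq : ∀ i : Fin n, (G i).2 = ∑' k, v i k := by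
    intro i
    have h0 : volume (arc (G i).1 (G i).2) = ENNReal.ofReal (G i).2 :=
      volume_arc (hlen i).1 (hlen i).2
    have h1 : (G i).2 = (volume (arc (G i).1 (G i).2)).toReal := by
      rw [h0, ENNReal.toReal_ofReal (hlen i).1]
    rw [h1, hvol i, ENNReal.tsum_toReal_eq (fun k => measure_ne_top _ _)]
  have hv_eq : ∀ i k, v i k = if I k ⊆ arc (G i).1 (G i).2 then arcLen (I k) else 0 := by
    intro i k
    by_cases h : I k ⊆ arc (G i).1 (G i).2
    · rw [if_pos h, hv]
      simp only
      rw [Set.inter_eq_right.mpr h]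
      rfl
    · rcases hdich i k with h' | h'
      · exact absurd h' h
      · rw [if_neg h, hv]; simp only; rw [h']; simp
  have hvlt : ∀ i : Fin n, ∀ k, k < N → v i k = 0 := by
    intro i k hk
    rw [hv]; simp only
    have : arc (G i).1 (G i).2 ∩ I k = ∅ := by
      rw [Set.eq_empty_iff_forall_notMem]
      rintro x ⟨hx1, hx2⟩
      exact ((hgapEN i hx1).2) (Set.mem_iUnion.mpr ⟨k, by simp [hk, hx2]⟩)
    rw [this]; simp
  have hshift : ∀ i : Fin n, (G i).2 = ∑' j, v i (j + N) := by
    intro i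
    have := Summable.sum_add_tsum_nat_add N (hvsum i)
    have hz : ∑ k ∈ Finset.range N, v i k = 0 :=
      Finset.sum_eq_zero (fun k hk => hvlt i k (Finset.mem_range.mp hk))
    rw [hlen_eq i, ← this, hz, zero_add]
  -- the per-gap entropy bound
  set g : Fin n → ℕ → ℝ :=
    fun i j => if I (j + N) ⊆ arc (G i).1 (G i).2 then aa (j + N) else 0 with hg
  have hgnn : ∀ i j, 0 ≤ g i j := by
    intro i j; rw [hg]; simp only
    split
    · exact haan _
    · exact le_refl 0
  have hgle : ∀ i j, g i j ≤ aa (j + N) := by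
    intro i j; rw [hg]; simp only
    split
    · exact le_refl _
    · exact haan _
  have hgsum : ∀ i, Summable (g i) :=
    fun i => Summable.of_nonneg_of_le (hgnn i) (hgle i) hentN
  have hB : ∀ i : Fin n, (G i).2 * Λ ((G i).2) ≤ ∑' j, g i j := by
    intro i
    rcases eq_or_lt_of_le (hlen i).1 with hs0 | hs0
    · rw [← hs0, zero_mul]
      exact tsum_nonneg (hgnn i)
    · have hvshift : Summable fun j => v i (j + N) := (summable_nat_add_iff N).mpr (hvsum i)
      calc (G i).2 * Λ ((G i).2) = (∑' j, v i (j + N)) * Λ ((G i).2) := by rw [← hshift i]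
        _ = ∑' j, v i (j + N) * Λ ((G i).2) := by rw [tsum_mul_right]
        _ ≤ ∑' j, g i j := by
            apply Summable.tsum_le_tsum _ (hvshift.mul_right _) (hgsum i)
            intro j
            rw [hv_eq, hg]
            simp only
            by_cases h : I (j + N) ⊆ arc (G i).1 (G i).2
            · rw [if_pos h, if_pos h, haa]
              simp only
              rcases eq_or_lt_of_le (arcLen_nonneg (I (j + N))) with ht0 | ht0
              · rw [← ht0]; simp
              · apply mul_le_mul_of_nonneg_left _ (le_of_lt ht0)
                apply hΛ.2.1 ⟨ht0, arcLen_le_one _⟩ ⟨hs0, (hlen i).2⟩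
                have : v i (j + N) ≤ ∑' j', v i (j' + N) :=
                  Summable.le_tsum hvshift j (fun j' _ => hvnn i _)
                rw [hv_eq, if_pos h] at this
                rw [← hshift i] at this
                exact this
            · rw [if_neg h, if_neg h, zero_mul]
  -- the row sums
  have hrow : ∀ j, ∑ i : Fin n, g i j ≤ aa (j + N) := by
    intro j
    by_cases hne : (I (j + N)).Nonempty
    · by_cases hex : ∃ i : Fin n, I (j + N) ⊆ arc (G i).1 (G i).2
      · obtain ⟨i0, hi0⟩ := hex
        have hz : ∀ i ∈ Finset.univ, i ≠ i0 → g i j = 0 := by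
          intro i _ hii
          rw [hg]; simp only
          rw [if_neg]
          intro hcon
          obtain ⟨x, hx⟩ := hne
          exact Set.disjoint_left.mp (hdis i i0 hii) (hcon hx) (hi0 hx)
        rw [Finset.sum_eq_single_of_mem i0 (Finset.mem_univ i0) hz]
        exact hgle i0 j
      · push_neg at hex
        have : ∀ i ∈ Finset.univ, g i j = 0 := by
          intro i _
          rw [hg]; simp only
          rw [if_neg (hex i)]
        rw [Finset.sum_eq_zero this]
        exact haan _
    · have hempty : I (j + N) = ∅ := Set.not_nonempty_iff_eq_empty.mp hne
      have ha0 : aa (j + N) = 0 := by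
        rw [haa]; simp only
        rw [hempty]
        have : arcLen (∅ : Set Circle1) = 0 := by simp [arcLen]
        rw [this, zero_mul]
      have : ∀ i ∈ Finset.univ, g i j = 0 := by
        intro i _
        rw [hg]; simp only
        split
        · exact ha0
        · rfl
      rw [Finset.sum_eq_zero this, ha0]
  -- assemble
  have harcs : ∀ i ∈ (Finset.univ : Finset (Fin n)), IsArc (arc (G i).1 (G i).2) :=
    fun i _ => isArc_arc (hlen i).1 (hlen i).2
  have hEq : ρ.m (EN I N) = ∑ i : Fin n, ρ.m (arc (G i).1 (G i).2) := by
    have := pm_union_finset ρ Finset.univ (fun i => arc (G i).1 (G i).2) ∅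
      harcs (fun i _ j _ hij => hdis i j hij) (fun i _ => Set.disjoint_left.mpr (by simp))
    rw [Set.empty_union, ρ.empty, zero_add,
      show (⋃ i ∈ (Finset.univ : Finset (Fin n)), arc (G i).1 (G i).2)
        = ⋃ i, arc (G i).1 (G i).2 by simp] at this
    rw [hunion]
    exact this
  calc ρ.m (EN I N) = ∑ i : Fin n, ρ.m (arc (G i).1 (G i).2) := hEq
    _ ≤ ∑ i : Fin n, K * ((G i).2 * Λ ((G i).2)) := by
        apply Finset.sum_le_sum
        intro i _
        have := hρ _ (harcs i (Finset.mem_univ i))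
        rwa [arcLen_arc (hlen i).1 (hlen i).2, mul_assoc] at this
    _ = K * ∑ i : Fin n, (G i).2 * Λ ((G i).2) := by rw [Finset.mul_sum]
    _ ≤ K * ∑ i : Fin n, ∑' j, g i j :=
        mul_le_mul_of_nonneg_left (Finset.sum_le_sum (fun i _ => hB i)) hK
    _ = K * ∑' j, ∑ i : Fin n, g i j := by
        rw [Summable.tsum_finsetSum (fun i _ => hgsum i)]
    _ ≤ K * ∑' j, aa (j + N) := by
        apply mul_le_mul_of_nonneg_left _ hK
        apply Summable.tsum_le_tsum hrow _ hentN
        exact summable_sum (fun i _ => hgsum i)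

end Stmt19Aux

open Stmt19Aux

/-- If a `Λ`-bounded premeasure `μ` is `Λ`-absolutely continuous — witnessed by
premeasures `νₙ` with `supₙ ‖νₙ‖⁺_Λ < ∞` and `sup_I |(μ+νₙ)(I)| → 0` — then the
`Λ`-singular part of `μ` vanishes: for every `Λ`-Carleson set `F` with
complementary arcs `Iₖ`, `μ_s(F) = −Σₖ μ(Iₖ) = 0`. -/
theorem stmt19 (Λ : ℝ → ℝ) (hΛ : Majorant Λ) (μ : Premeasure) (C : ℝ)
    (hμ : LambdaBounded Λ μ C)
    (ν : ℕ → Premeasure) (M : ℝ) (hν : ∀ n, LambdaBounded Λ (ν n) M)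
    (hconv : ∀ ε > (0:ℝ), ∃ N, ∀ n ≥ N, ∀ S : Set Circle1, IsArc S →
      |μ.m S + (ν n).m S| ≤ ε)
    (F : Set Circle1) (hF : IsClosed F) (hFne : F.Nonempty) (hF0 : volume F = 0)
    (I : ℕ → Set Circle1) (hI : ∀ k, IsArc (I k))
    (hdisj : Pairwise (Function.onFun Disjoint I))
    (hcomp : Fᶜ = ⋃ k, I k)
    (hent : Summable fun k => arcLen (I k) * Λ (arcLen (I k))) :
    HasSum (fun k => μ.m (I k)) 0 := by
  classical
  set aI : ℕ → ℝ := fun k => arcLen (I k) * Λ (arcLen (I k)) with haI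
  set K : ℝ := max (max C M) 0 with hKdef
  have hK0 : 0 ≤ K := le_max_right _ _
  have hCK : C ≤ K := le_trans (le_max_left _ _) (le_max_left _ _)
  have hMK : M ≤ K := le_trans (le_max_right C M) (le_max_left _ _)
  have hmono : ∀ (ρ : Premeasure) (c : ℝ), c ≤ K → LambdaBounded Λ ρ c →
      LambdaBounded Λ ρ K := by
    intro ρ c hc hρ S hS
    calc ρ.m S ≤ c * arcLen S * Λ (arcLen S) := hρ S hS
      _ = c * (arcLen S * Λ (arcLen S)) := by ring
      _ ≤ K * (arcLen S * Λ (arcLen S)) := mul_le_mul_of_nonneg_right hc (aa_nonneg hΛ S)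
      _ = K * arcLen S * Λ (arcLen S) := by ring
  have hμK : LambdaBounded Λ μ K := hmono μ C hCK hμ
  have hνK : ∀ n, LambdaBounded Λ (ν n) K := fun n => hmono (ν n) M hMK (hν n)
  have habs : ∀ k, |μ.m (I k)| ≤ K * aI k := by
    intro k
    have hup : μ.m (I k) ≤ K * aI k := by
      have := hμK (I k) (hI k)
      rw [haI]; simpa [mul_assoc] using this
    have hlow : -(K * aI k) ≤ μ.m (I k) := by
      by_contra hcon
      push_neg at hcon
      set ε := (-(K * aI k) - μ.m (I k)) / 2 with hε
      have hεpos : 0 < ε := by rw [hε]; linarith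
      obtain ⟨N₀, hN₀⟩ := hconv ε hεpos
      have h1 := abs_le.mp (hN₀ N₀ le_rfl (I k) (hI k))
      have h2 : (ν N₀).m (I k) ≤ K * aI k := by
        have := hνK N₀ (I k) (hI k)
        rw [haI]; simpa [mul_assoc] using this
      have h3 := h1.1
      rw [hε] at h3
      linarith
    exact abs_le.mpr ⟨hlow, hup⟩
  have hsum : Summable fun k => μ.m (I k) :=
    Summable.of_abs (Summable.of_nonneg_of_le (fun k => abs_nonneg _) habs (hent.mul_left K))
  set T : ℕ → ℝ := fun N => ∑' j, aI (j + N) with hT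
  have hEN_add : ∀ (ρ : Premeasure) (N : ℕ),
      ρ.m (EN I N) + ∑ k ∈ Finset.range N, ρ.m (I k) = 0 := by
    intro ρ N
    have h := pm_union_finset ρ (Finset.range N) I (EN I N)
      (fun k _ => hI k)
      (fun i _ j _ hij => hdisj hij)
      (fun k hk => Set.disjoint_left.mpr
        (fun x hx hxk => hx.2 (Set.mem_biUnion hk hxk)))
    have hcover : EN I N ∪ ⋃ k ∈ Finset.range N, I k = Set.univ := by
      rw [EN, Set.diff_union_self, Set.univ_union]
    rw [hcover, ρ.total] at h
    linarith [h]
  have hkeyμ := fun N => keyBound hΛ hF hF0 hI hdisj hcomp hent μ K hK0 hμK N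
  have hkeyν := fun n N => keyBound hΛ hF hF0 hI hdisj hcomp hent (ν n) K hK0 (hνK n) N
  have hsq : ∀ N, |∑ k ∈ Finset.range N, μ.m (I k)| ≤ K * T N := by
    intro N
    have hlow : -(K * T N) ≤ ∑ k ∈ Finset.range N, μ.m (I k) := by
      have h1 := hEN_add μ N
      have h2 : μ.m (EN I N) ≤ K * T N := hkeyμ N
      linarith
    have hup : ∀ ε > 0, ∑ k ∈ Finset.range N, μ.m (I k) ≤ K * T N + ε := by
      intro ε hε
      obtain ⟨N₀, hN₀⟩ := hconv (ε / (N + 1)) (by positivity)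
      have hterm : ∀ k, μ.m (I k) ≤ -(ν N₀).m (I k) + ε / (N+1) := by
        intro k
        have := (abs_le.mp (hN₀ N₀ le_rfl (I k) (hI k))).2
        linarith
      have hcard : ((Finset.range N).card : ℝ) = N := by simp
      calc ∑ k ∈ Finset.range N, μ.m (I k)
          ≤ ∑ k ∈ Finset.range N, (-(ν N₀).m (I k) + ε / (N+1)) :=
            Finset.sum_le_sum (fun k _ => hterm k)
        _ = -(∑ k ∈ Finset.range N, (ν N₀).m (I k)) + (N:ℝ) * (ε / (N+1)) := by
            rw [Finset.sum_add_distrib, Finset.sum_const, ← Finset.sum_neg_distrib,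
              nsmul_eq_mul, hcard]
        _ ≤ K * T N + ε := by
            have h1 := hEN_add (ν N₀) N
            have h2 : (ν N₀).m (EN I N) ≤ K * T N := hkeyν N₀ N
            have h3 : (N:ℝ) * (ε / (N+1)) ≤ ε := by
              rw [mul_div_assoc']
              rw [div_le_iff₀ (by positivity)]
              nlinarith
            linarith
    have hupfin : ∑ k ∈ Finset.range N, μ.m (I k) ≤ K * T N := by
      by_contra hcon
      push_neg at hcon
      have := hup ((∑ k ∈ Finset.range N, μ.m (I k) - K * T N) / 2) (by linarith)
      linarith
    exact abs_le.mpr ⟨hlow, hupfin⟩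
  have hTto : Tendsto T atTop (𝓝 0) := by
    have hps := hent.hasSum.tendsto_sum_nat
    have hT_eq : ∀ N, T N = (∑' k, aI k) - ∑ k ∈ Finset.range N, aI k := by
      intro N
      have h0 : T N = ∑' (i : ℕ), aI (i + N) := rfl
      linarith [Summable.sum_add_tsum_nat_add N hent, h0]
    have h2 : Tendsto (fun N => (∑' k, aI k) - ∑ k ∈ Finset.range N, aI k) atTop
        (𝓝 ((∑' k, aI k) - (∑' k, aI k))) := tendsto_const_nhds.sub hps
    rw [sub_self] at h2
    exact h2.congr (fun N => (hT_eq N).symm)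
  have hPto : Tendsto (fun N => ∑ k ∈ Finset.range N, μ.m (I k)) atTop (𝓝 0) := by
    have hg : Tendsto (fun N => K * T N) atTop (𝓝 0) := by
      have := tendsto_const_nhds (x := K) (f := atTop (α := ℕ)) |>.mul hTto
      rwa [mul_zero] at this
    exact squeeze_zero_norm (fun N => by rw [Real.norm_eq_abs]; exact hsq N) hg
  have hfin : ∑' k, μ.m (I k) = 0 :=
    tendsto_nhds_unique hsum.hasSum.tendsto_sum_nat hPto
  rw [← hfin]
  exact hsum.hasSum
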